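/- Define g(j) := Σ_{k=⌈3(j−1)/2⌉}^{3j−3} f(k,j) for integers j ≥ 2. Then for every integer j ≥ 4, one has g(j) = 4·g(j−1) + g(j−2). -/

import Mathlib

open scoped BigOperators Pointwise

/-- Binomial coefficient `C(a,b)` for integers, with `C(a,b) = 0` when `b < 0` or `b > a`. -/
def binomZ (a b : ℤ) : ℤ := if 0 ≤ b ∧ b ≤ a then (a.toNat.choose b.toNat : ℤ) else 0

/-- `f(k,h) = 2[C(k-2, 3(h-1)-k) + C(k-2, 3(h-1)-k-1) + C(k-2, 3(h-1)-k-2)]`. -/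
def fkh (k h : ℤ) : ℤ :=
  2 * (binomZ (k - 2) (3 * (h - 1) - k) + binomZ (k - 2) (3 * (h - 1) - k - 1) +
    binomZ (k - 2) (3 * (h - 1) - k - 2))

/-- `g(j) = ∑_{k=⌈3(j-1)/2⌉}^{3j-3} f(k,j)`. -/
noncomputable def gsum (j : ℤ) : ℤ :=
  ∑ k ∈ Finset.Icc ⌈(3 * ((j : ℚ) - 1)) / 2⌉ (3 * j - 3), fkh k j

/-- Reindex an integer interval sum to a `range` sum. -/
lemma sum_icc_int (f : ℤ → ℤ) (M : ℕ) :
    ∑ k ∈ Finset.Icc (0:ℤ) (M:ℤ), f k = ∑ k ∈ Finset.range (M+1), f k := by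
  induction M with
  | zero => simp
  | succ m ih =>
    have h1 : ((m+1:ℕ):ℤ) = (m:ℤ) + 1 := by push_cast; ring
    have h2 : Finset.Icc (0:ℤ) ((m:ℤ)+1) = insert ((m:ℤ)+1) (Finset.Icc (0:ℤ) (m:ℤ)) := by
      ext x
      simp only [Finset.mem_Icc, Finset.mem_insert]
      omega
    rw [h1, h2, Finset.sum_insert (by simp), Finset.sum_range_succ, ih, h1]
    ring

/-- Diagonal sums of the Pascal triangle give Fibonacci numbers. -/
lemma diag_sum (c : ℤ) (M : ℕ) (h1 : -1 ≤ c) (h2 : c ≤ M) :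
    ∑ k ∈ Finset.range (M+1), binomZ (k:ℤ) (c - k) = ((c+1).toNat.fib : ℤ) := by
  rcases eq_or_lt_of_le h1 with h | h
  · have : ∀ k ∈ Finset.range (M+1), binomZ (k:ℤ) (c - k) = 0 := by
      intro k _
      unfold binomZ
      rw [if_neg (by omega)]
    rw [Finset.sum_eq_zero this, ← h]
    simp
  · have hc : 0 ≤ c := by omega
    set N := c.toNat with hN
    have hcN : c = (N:ℤ) := by omega
    have hNM : N ≤ M := by omega
    -- terms with k > N vanish
    have hsub : Finset.range (N+1) ⊆ Finset.range (M+1) := by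
      apply Finset.range_subset_range.2; omega
    rw [← Finset.sum_subset hsub (by
      intro k hk hk2
      simp only [Finset.mem_range] at hk hk2
      unfold binomZ
      rw [if_neg (by omega)])]
    have hterm : ∀ k ∈ Finset.range (N+1),
        binomZ (k:ℤ) (c - k) = ((k.choose (N - k) : ℕ) : ℤ) := by
      intro k hk
      simp only [Finset.mem_range] at hk
      have hkN : k ≤ N := by omega
      unfold binomZ
      by_cases hle : c - k ≤ (k:ℤ)
      · rw [if_pos ⟨by omega, hle⟩]
        congr 1
        have ha : ((k:ℤ)).toNat = k := by omega
        have hb : (c - k).toNat = N - k := by omega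
        rw [ha, hb]
      · rw [if_neg (by omega), Nat.choose_eq_zero_of_lt (by omega)]
        simp
    rw [Finset.sum_congr rfl hterm]
    have : (c+1).toNat = N + 1 := by omega
    rw [this, Nat.fib_succ_eq_sum_choose, Finset.Nat.sum_antidiagonal_eq_sum_range_succ_mk]
    push_cast
    rfl

lemma fkh_zero_of_lt {k j : ℤ} (h : 2*k < 3*j - 3) : fkh k j = 0 := by
  unfold fkh binomZ
  rw [if_neg (by omega), if_neg (by omega), if_neg (by omega)]
  ring

/-- Closed form for `gsum`. -/
lemma gsum_eq (j : ℤ) (hj : 2 ≤ j) :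
    gsum j = 2 * (((3*j-4).toNat.fib : ℤ) + ((3*j-5).toNat.fib : ℤ) + ((3*j-6).toNat.fib : ℤ)) := by
  set n : ℕ := (3*j-3).toNat with hn
  have hn3 : 3 ≤ n := by omega
  have hnj : (n:ℤ) = 3*j - 3 := by omega
  -- extend the sum down to 0
  have hL0 : (0:ℤ) ≤ ⌈(3 * ((j : ℚ) - 1)) / 2⌉ := by
    apply Int.ceil_nonneg
    have : (2:ℚ) ≤ (j:ℚ) := by exact_mod_cast hj
    nlinarith
  have hstep1 : gsum j = ∑ k ∈ Finset.Icc (0:ℤ) (3*j-3), fkh k j := by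
    unfold gsum
    apply Finset.sum_subset
    · intro x hx
      simp only [Finset.mem_Icc] at hx ⊢
      omega
    · intro x hx hx2
      simp only [Finset.mem_Icc] at hx
      simp only [Finset.mem_Icc, not_and, not_le] at hx2
      have hxL : x < ⌈(3 * ((j : ℚ) - 1)) / 2⌉ := by
        by_contra hcon
        push_neg at hcon
        exact absurd (hx2 hcon) (by omega)
      apply fkh_zero_of_lt
      have := Int.ceil_le.not.mp (by omega : ¬ ⌈(3 * ((j : ℚ) - 1)) / 2⌉ ≤ x)
      push_neg at this
      have h2 : (2:ℚ) * x < 3 * ((j:ℚ) - 1) := by nlinarith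
      have h3 : ((2*x : ℤ) : ℚ) < ((3*j - 3 : ℤ) : ℚ) := by push_cast; linarith
      exact_mod_cast h3
  rw [hstep1, show (3*j-3 : ℤ) = (n:ℤ) by omega, sum_icc_int (fun k => fkh k j) n]
  -- split into three diagonal sums
  have split : ∑ k ∈ Finset.range (n+1), fkh k j =
      2 * ((∑ k ∈ Finset.range (n+1), binomZ (k - 2) (3*(j-1) - k))
        + (∑ k ∈ Finset.range (n+1), binomZ (k - 2) (3*(j-1) - k - 1))
        + (∑ k ∈ Finset.range (n+1), binomZ (k - 2) (3*(j-1) - k - 2))) := by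
    rw [← Finset.sum_add_distrib, ← Finset.sum_add_distrib, Finset.mul_sum]
    rfl
  rw [split]
  -- evaluate each of the three sums
  have key : ∀ i : ℤ, 0 ≤ i → i ≤ 2 →
      ∑ k ∈ Finset.range (n+1), binomZ ((k:ℤ) - 2) (3*(j-1) - k - i)
        = (((3*j - 4 - i).toNat.fib : ℕ) : ℤ) := by
    intro i hi0 hi2
    obtain ⟨m, hm⟩ : ∃ m : ℕ, n + 1 = (m + 2) + 1 := ⟨n - 2, by omega⟩
    rw [hm, Finset.sum_range_succ', Finset.sum_range_succ']
    have z0 : binomZ ((0:ℕ) - 2 : ℤ) (3*(j-1) - (0:ℕ) - i) = 0 := by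
      unfold binomZ; rw [if_neg (by push_cast; omega)]
    have z1 : binomZ (((0+1:ℕ):ℤ) - 2) (3*(j-1) - ((0+1:ℕ):ℤ) - i) = 0 := by
      unfold binomZ; rw [if_neg (by push_cast; omega)]
    have hcongr : ∀ k ∈ Finset.range (m+1),
        binomZ (((k+1+1:ℕ):ℤ) - 2) (3*(j-1) - ((k+1+1:ℕ):ℤ) - i)
          = binomZ (k:ℤ) ((3*j - 5 - i) - k) := by
      intro k _
      have e1 : (((k+1+1:ℕ):ℤ) - 2) = (k:ℤ) := by push_cast; ring
      have e2 : (3*(j-1) - ((k+1+1:ℕ):ℤ) - i) = (3*j - 5 - i) - k := by push_cast; ring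
      rw [e1, e2]
    rw [Finset.sum_congr rfl hcongr]
    push_cast at z0 z1 ⊢
    rw [z0, z1, add_zero, add_zero]
    have hdiag := diag_sum (3*j - 5 - i) m (by omega) (by omega)
    rw [hdiag]
    congr 2
    omega
  have k0 := key 0 (by norm_num) (by norm_num)
  have k1 := key 1 (by norm_num) (by norm_num)
  have k2 := key 2 (by norm_num) (by norm_num)
  simp only [sub_zero] at k0
  rw [show (3*j - 4 - 1 : ℤ) = 3*j - 5 by ring] at k1
  rw [show (3*j - 4 - 2 : ℤ) = 3*j - 6 by ring] at k2
  rw [k0, k1, k2]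

lemma fib_six (m : ℕ) : Nat.fib (m + 6) = 4 * Nat.fib (m + 3) + Nat.fib m := by
  have e2 : Nat.fib (m+2) = Nat.fib m + Nat.fib (m+1) := Nat.fib_add_two
  have e3 : Nat.fib (m+3) = Nat.fib (m+1) + Nat.fib (m+2) := by
    rw [show m+3 = (m+1)+2 by omega]; exact Nat.fib_add_two
  have e4 : Nat.fib (m+4) = Nat.fib (m+2) + Nat.fib (m+3) := by
    rw [show m+4 = (m+2)+2 by omega]; exact Nat.fib_add_two
  have e5 : Nat.fib (m+5) = Nat.fib (m+3) + Nat.fib (m+4) := by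
    rw [show m+5 = (m+3)+2 by omega]; exact Nat.fib_add_two
  have e6 : Nat.fib (m+6) = Nat.fib (m+4) + Nat.fib (m+5) := by
    rw [show m+6 = (m+4)+2 by omega]; exact Nat.fib_add_two
  omega

theorem stmt15 (j : ℤ) (hj : 4 ≤ j) :
    gsum j = 4 * gsum (j - 1) + gsum (j - 2) := by
  obtain ⟨t, ht⟩ : ∃ t : ℕ, j = (t:ℤ) + 4 := ⟨(j-4).toNat, by omega⟩
  rw [gsum_eq j (by omega), gsum_eq (j-1) (by omega), gsum_eq (j-2) (by omega)]
  have e1 : (3*j-4).toNat = 3*t + 8 := by omega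
  have e2 : (3*j-5).toNat = 3*t + 7 := by omega
  have e3 : (3*j-6).toNat = 3*t + 6 := by omega
  have e4 : (3*(j-1)-4).toNat = 3*t + 5 := by omega
  have e5 : (3*(j-1)-5).toNat = 3*t + 4 := by omega
  have e6 : (3*(j-1)-6).toNat = 3*t + 3 := by omega
  have e7 : (3*(j-2)-4).toNat = 3*t + 2 := by omega
  have e8 : (3*(j-2)-5).toNat = 3*t + 1 := by omega
  have e9 : (3*(j-2)-6).toNat = 3*t := by omega
  rw [e1, e2, e3, e4, e5, e6, e7, e8, e9]
  have f1 := fib_six (3*t + 2)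
  have f2 := fib_six (3*t + 1)
  have f3 := fib_six (3*t)
  rw [show 3*t+2+6 = 3*t+8 by ring, show 3*t+2+3 = 3*t+5 by ring] at f1
  rw [show 3*t+1+6 = 3*t+7 by ring, show 3*t+1+3 = 3*t+4 by ring] at f2
  rw [show 3*t+0+6 = 3*t+6 by ring, show 3*t+0+3 = 3*t+3 by ring] at f3
  rw [f1, f2, f3]
  push_cast
  ring
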